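/- For every alphabet size n ≥ 2 and every ε > 0, there exists a probability distribution P on n symbols whose Huffman code is anti-uniform and whose average length L(P) < 1 + ε; hence the infimum of average lengths of AUH codes on n symbols is 1. -/

import Mathlib

open Finset

def IsAUH (n : ℕ) (p : ℕ → ℝ) : Prop :=
  (∀ i ∈ Finset.Icc 1 n, 0 ≤ p i) ∧
  (∀ i j, 1 ≤ i → i ≤ j → j ≤ n → p j ≤ p i) ∧
  (∑ i ∈ Finset.Icc 1 n, p i = 1) ∧
  (∀ i, 1 ≤ i → i ≤ n - 2 → ∑ j ∈ Finset.Icc (i + 2) n, p j ≤ p i)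

noncomputable def avgLen (n : ℕ) (p : ℕ → ℝ) : ℝ :=
  ∑ i ∈ Finset.Icc 1 (n - 1), (i : ℝ) * p i + ((n : ℝ) - 1) * p n

noncomputable def pdist (n : ℕ) (δ : ℝ) (i : ℕ) : ℝ :=
  if i = 1 then 1 - δ else if i = n then δ / 2 ^ (n - 2) else δ / 2 ^ (i - 1)

lemma myDivPowLe (δ : ℝ) (h : 0 ≤ δ) {a b : ℕ} (hab : b ≤ a) : δ / 2 ^ a ≤ δ / 2 ^ b := by
  gcongr
  exact one_le_two

lemma pdist_tail (n : ℕ) (hn : 2 ≤ n) (δ : ℝ) :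
    ∀ k a, a + k = n → 2 ≤ a → ∑ j ∈ Icc a n, pdist n δ j = δ / 2 ^ (a - 2) := by
  intro k
  induction k with
  | zero =>
    intro a ha h2
    have : a = n := by omega
    subst this
    rw [Finset.Icc_self, Finset.sum_singleton]
    unfold pdist
    rw [if_neg (by omega), if_pos rfl]
  | succ k ih =>
    intro a ha h2
    have han : a < n := by omega
    rw [Finset.Icc_eq_cons_Ioc (le_of_lt han), Finset.sum_cons, ← Finset.Icc_add_one_left_eq_Ioc,
      ih (a + 1) (by omega) (by omega)]
    have hpa : pdist n δ a = δ / 2 ^ (a - 1) := by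
      unfold pdist; rw [if_neg (by omega), if_neg (by omega)]
    rw [hpa, show a + 1 - 2 = (a - 2) + 1 from by omega,
      show a - 1 = (a - 2) + 1 from by omega, pow_succ]
    have hx : (2 : ℝ) ^ (a - 2) ≠ 0 := by positivity
    field_simp
    ring

lemma pdist_sum (n : ℕ) (hn : 2 ≤ n) (δ : ℝ) : ∑ i ∈ Icc 1 n, pdist n δ i = 1 := by
  rw [Finset.Icc_eq_cons_Ioc (by omega : 1 ≤ n), Finset.sum_cons, ← Finset.Icc_add_one_left_eq_Ioc,
    pdist_tail n hn δ (n - 2) (1 + 1) (by omega) le_rfl]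
  unfold pdist
  rw [if_pos rfl]
  norm_num

lemma pdist_nonneg (n : ℕ) (δ : ℝ) (h0 : 0 ≤ δ) (h1 : δ ≤ 1) (i : ℕ) : 0 ≤ pdist n δ i := by
  unfold pdist
  split_ifs with h h'
  · linarith
  · positivity
  · positivity

lemma pdist_isAUH (n : ℕ) (hn : 2 ≤ n) (δ : ℝ) (h0 : 0 < δ) (h4 : δ ≤ 1 / 4) :
    IsAUH n (pdist n δ) := by
  have hδ1 : δ ≤ 1 := by linarith
  have hle : ∀ k : ℕ, δ / 2 ^ k ≤ δ := by
    intro k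
    apply div_le_self h0.le
    exact one_le_pow₀ one_le_two
  refine ⟨fun i _ => pdist_nonneg n δ h0.le hδ1 i, ?_, pdist_sum n hn δ, ?_⟩
  · intro i j h1 hij hjn
    by_cases hi1 : i = 1
    · subst hi1
      have : pdist n δ 1 = 1 - δ := by unfold pdist; rw [if_pos rfl]
      rw [this]
      unfold pdist
      split_ifs with h h'
      · exact le_refl _
      · have := hle (n - 2); linarith
      · have := hle (j - 1); linarith
    · by_cases hin : i = n
      · have : j = n := by omega
        rw [this, hin]
      · have hpi : pdist n δ i = δ / 2 ^ (i - 1) := by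
          unfold pdist; rw [if_neg hi1, if_neg hin]
        rw [hpi]
        unfold pdist
        rw [if_neg (by omega)]
        split_ifs with h
        · exact myDivPowLe δ h0.le (by omega)
        · exact myDivPowLe δ h0.le (by omega)
  · intro i h1 hin
    rw [pdist_tail n hn δ (n - (i + 2)) (i + 2) (by omega) (by omega),
      show i + 2 - 2 = i from by omega]
    by_cases hi1 : i = 1
    · subst hi1
      have : pdist n δ 1 = 1 - δ := by unfold pdist; rw [if_pos rfl]
      rw [this]
      have := hle 1
      norm_num at this ⊢
      linarith
    · have hpi : pdist n δ i = δ / 2 ^ (i - 1) := by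
        unfold pdist; rw [if_neg hi1, if_neg (by omega)]
      rw [hpi]
      exact myDivPowLe δ h0.le (by omega)

lemma one_le_avgLen (n : ℕ) (hn : 2 ≤ n) (p : ℕ → ℝ) (hp : IsAUH n p) : 1 ≤ avgLen n p := by
  obtain ⟨hpos, hmono, hsum, _⟩ := hp
  have hsplit : ∑ i ∈ Icc 1 n, p i = ∑ i ∈ Icc 1 (n - 1), p i + p n := by
    have := Finset.sum_Icc_succ_top (f := p) (a := 1) (b := n - 1) (by omega)
    rw [show n - 1 + 1 = n from by omega] at this
    exact this
  have h1 : ∑ i ∈ Icc 1 (n - 1), p i ≤ ∑ i ∈ Icc 1 (n - 1), (i : ℝ) * p i := by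
    apply Finset.sum_le_sum
    intro i hi
    simp only [Finset.mem_Icc] at hi
    have hpi : 0 ≤ p i := hpos i (Finset.mem_Icc.mpr ⟨hi.1, by omega⟩)
    have : (1 : ℝ) ≤ (i : ℝ) := by exact_mod_cast hi.1
    nlinarith
  have hpn : 0 ≤ p n := hpos n (Finset.mem_Icc.mpr ⟨by omega, le_rfl⟩)
  have h2 : p n ≤ ((n : ℝ) - 1) * p n := by
    have : (2 : ℝ) ≤ (n : ℝ) := by exact_mod_cast hn
    nlinarith
  unfold avgLen
  linarith [hsum, hsplit ▸ hsum]

theorem avgLen_inf_one (n : ℕ) (hn : 2 ≤ n) :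
    (∀ ε : ℝ, 0 < ε → ∃ p : ℕ → ℝ, IsAUH n p ∧ avgLen n p < 1 + ε) ∧
    sInf {x : ℝ | ∃ p : ℕ → ℝ, IsAUH n p ∧ avgLen n p = x} = 1 := by
  have hn2 : (2 : ℝ) ≤ (n : ℝ) := by exact_mod_cast hn
  have key : ∀ ε : ℝ, 0 < ε → ∃ p : ℕ → ℝ, IsAUH n p ∧ avgLen n p < 1 + ε := by
    intro ε hε
    set δ : ℝ := min (1 / 4) (ε / (2 * n)) with hδdef
    have hδ0 : 0 < δ := by
      apply lt_min (by norm_num)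
      positivity
    have hδ4 : δ ≤ 1 / 4 := min_le_left _ _
    have hδε : δ ≤ ε / (2 * n) := min_le_right _ _
    refine ⟨pdist n δ, pdist_isAUH n hn δ hδ0 hδ4, ?_⟩
    -- bound the average length
    have htail : ∑ j ∈ Icc 2 n, pdist n δ j = δ := by
      have := pdist_tail n hn δ (n - 2) 2 (by omega) le_rfl
      simpa using this
    have hsplit2 : ∑ j ∈ Icc 2 n, pdist n δ j =
        ∑ j ∈ Icc 2 (n - 1), pdist n δ j + pdist n δ n := by
      have := Finset.sum_Icc_succ_top (f := pdist n δ) (a := 2) (b := n - 1) (by omega)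
      rw [show n - 1 + 1 = n from by omega] at this
      exact this
    have hnonneg : ∀ i, 0 ≤ pdist n δ i := pdist_nonneg n δ hδ0.le (by linarith)
    have hbound : avgLen n (pdist n δ) ≤ 1 - δ + (n : ℝ) * δ := by
      unfold avgLen
      have hsplit1 : ∑ i ∈ Icc 1 (n - 1), (i : ℝ) * pdist n δ i =
          1 * pdist n δ 1 + ∑ i ∈ Icc 2 (n - 1), (i : ℝ) * pdist n δ i := by
        rw [Finset.Icc_eq_cons_Ioc (by omega : 1 ≤ n - 1), Finset.sum_cons, ← Finset.Icc_add_one_left_eq_Ioc]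
        norm_num
      rw [hsplit1]
      have h1 : pdist n δ 1 = 1 - δ := by unfold pdist; rw [if_pos rfl]
      have h2 : ∑ i ∈ Icc 2 (n - 1), (i : ℝ) * pdist n δ i ≤
          ∑ i ∈ Icc 2 (n - 1), (n : ℝ) * pdist n δ i := by
        apply Finset.sum_le_sum
        intro i hi
        simp only [Finset.mem_Icc] at hi
        have : (i : ℝ) ≤ (n : ℝ) := by exact_mod_cast (by omega : i ≤ n)
        nlinarith [hnonneg i]
      have h3 : ((n : ℝ) - 1) * pdist n δ n ≤ (n : ℝ) * pdist n δ n := by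
        nlinarith [hnonneg n]
      have h4 : ∑ i ∈ Icc 2 (n - 1), (n : ℝ) * pdist n δ i + (n : ℝ) * pdist n δ n
          = (n : ℝ) * δ := by
        rw [← Finset.mul_sum, ← mul_add, ← hsplit2, htail]
      linarith
    have hfinal : (n : ℝ) * δ - δ < ε := by
      have hδε' : δ * (2 * n) ≤ ε := by
        have h2n : (0 : ℝ) < 2 * n := by linarith
        calc δ * (2 * n) ≤ (ε / (2 * n)) * (2 * n) := by
              apply mul_le_mul_of_nonneg_right hδε (le_of_lt h2n)
          _ = ε := by field_simp
      nlinarith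
    linarith
  refine ⟨key, le_antisymm ?_ ?_⟩
  · apply le_of_forall_pos_le_add
    intro ε hε
    obtain ⟨p, hp, hl⟩ := key ε hε
    have hmem : avgLen n p ∈ {x : ℝ | ∃ p : ℕ → ℝ, IsAUH n p ∧ avgLen n p = x} := ⟨p, hp, rfl⟩
    have hbdd : BddBelow {x : ℝ | ∃ p : ℕ → ℝ, IsAUH n p ∧ avgLen n p = x} := by
      refine ⟨1, ?_⟩
      rintro x ⟨q, hq, rfl⟩
      exact one_le_avgLen n hn q hq
    have := csInf_le hbdd hmem
    linarith
  · apply le_csInf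
    · obtain ⟨p, hp, _⟩ := key 1 one_pos
      exact ⟨avgLen n p, p, hp, rfl⟩
    · rintro x ⟨q, hq, rfl⟩
      exact one_le_avgLen n hn q hq
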